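/- Let $M, T$ be real $2\times 2$ matrices with $\det M = 1$, $T$ symmetric positive semi-definite, $r \neq 0$ real, $J = r\begin{pmatrix}0 & -1\\ 1& 0\end{pmatrix}$, and set $D = \mathrm{tr}\,M$, $\dot D = \mathrm{tr}(M J^{-1} T)$, $a = (M_{11}-M_{22},\, 2M_{21})^\top$, $b = (-2M_{12},\, M_{11}-M_{22})^\top$. Then $4r M_{21} \dot D = -T_{11}(D^2-4) + a^\top T a$ and $4r M_{12} \dot D = T_{22}(D^2-4) - b^\top T b$. Consequently, if $D^2 < 4$ and $T \neq 0$ (so $T_{11} > 0$ or $T_{22} > 0$), then $\dot D \neq 0$. -/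

import Mathlib

open Matrix

/-- The derivative identities for the Floquet discriminant: with `det M = 1`,
`T` symmetric positive semi-definite, `J = r [[0,-1],[1,0]]`, `D = tr M` and
`Ḋ = tr(M J⁻¹ T)`, one has
`4 r M₂₁ Ḋ = -T₁₁ (D²-4) + aᵀ T a` and `4 r M₁₂ Ḋ = T₂₂ (D²-4) - bᵀ T b`,
and consequently `Ḋ ≠ 0` whenever `D² < 4` and `T ≠ 0`. -/
theorem discriminant_derivative_identities (r : ℝ) (hr : r ≠ 0)
    (M T : Matrix (Fin 2) (Fin 2) ℝ) (hdet : M.det = 1)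
    (hT : T.PosSemidef) :
    let J : Matrix (Fin 2) (Fin 2) ℝ := r • !![0, -1; 1, 0]
    let D : ℝ := M.trace
    let Ddot : ℝ := (M * J⁻¹ * T).trace
    let a : Fin 2 → ℝ := ![M 0 0 - M 1 1, 2 * M 1 0]
    let b : Fin 2 → ℝ := ![-2 * M 0 1, M 0 0 - M 1 1]
    (4 * r * M 1 0 * Ddot = -(T 0 0) * (D ^ 2 - 4) + dotProduct a (T.mulVec a)) ∧
    (4 * r * M 0 1 * Ddot = T 1 1 * (D ^ 2 - 4) - dotProduct b (T.mulVec b)) ∧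
    (D ^ 2 < 4 → T ≠ 0 → Ddot ≠ 0) := by
  intro J D Ddot a b
  have hsym : T 0 1 = T 1 0 := by
    have := hT.1
    rw [Matrix.IsHermitian] at this
    conv_lhs => rw [← this]
    simp [Matrix.conjTranspose_apply]
  have hJinv : J⁻¹ = r⁻¹ • !![0, 1; -1, 0] := by
    apply Matrix.inv_eq_right_inv
    show (r • !![(0:ℝ), -1; 1, 0]) * (r⁻¹ • !![0, 1; -1, 0]) = 1
    rw [Matrix.smul_mul, Matrix.mul_smul, smul_smul, mul_inv_cancel₀ hr]
    norm_num [← Matrix.one_fin_two]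
  have hD : D = M 0 0 + M 1 1 := by
    simp [D, Matrix.trace_fin_two]
  have hDdot : Ddot = r⁻¹ * (M 0 0 * T 1 0 - M 1 1 * T 0 1
      - M 0 1 * T 0 0 + M 1 0 * T 1 1) := by
    simp [Ddot, hJinv, Matrix.trace_fin_two, Matrix.mul_apply, Fin.sum_univ_two,
      Matrix.smul_apply]
    ring
  have hdet' : M 0 0 * M 1 1 - M 0 1 * M 1 0 = 1 := by
    rw [← hdet, Matrix.det_fin_two]
  have ha : dotProduct a (T.mulVec a) =
      (M 0 0 - M 1 1)^2 * T 0 0 + 2 * (M 0 0 - M 1 1) * (2 * M 1 0) * T 1 0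
        + (2 * M 1 0)^2 * T 1 1 := by
    simp [a, dotProduct, Matrix.mulVec, Fin.sum_univ_two, dotProduct, hsym]
    ring
  have hb : dotProduct b (T.mulVec b) =
      (-2 * M 0 1)^2 * T 0 0 + 2 * (-2 * M 0 1) * (M 0 0 - M 1 1) * T 1 0
        + (M 0 0 - M 1 1)^2 * T 1 1 := by
    simp [b, dotProduct, Matrix.mulVec, Fin.sum_univ_two, dotProduct, hsym]
    ring
  have h1 : 4 * r * M 1 0 * Ddot = -(T 0 0) * (D ^ 2 - 4) + dotProduct a (T.mulVec a) := by
    rw [hDdot, ha, hD, hsym]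
    field_simp
    linear_combination (4 * T 0 0) * hdet'
  have h2 : 4 * r * M 0 1 * Ddot = T 1 1 * (D ^ 2 - 4) - dotProduct b (T.mulVec b) := by
    rw [hDdot, hb, hD, hsym]
    field_simp
    linear_combination (-4 * T 1 1) * hdet'
  refine ⟨h1, h2, ?_⟩
  intro hD4 hTne hdd
  have hqa : 0 ≤ dotProduct a (T.mulVec a) := by have := hT.dotProduct_mulVec_nonneg a; rwa [star_trivial] at this
  have hqb : 0 ≤ dotProduct b (T.mulVec b) := by have := hT.dotProduct_mulVec_nonneg b; rwa [star_trivial] at this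
  have hT00 : 0 ≤ T 0 0 := by
    have := hT.dotProduct_mulVec_nonneg ![1, 0]
    simpa [dotProduct, Matrix.mulVec, Fin.sum_univ_two] using this
  have hT11 : 0 ≤ T 1 1 := by
    have := hT.dotProduct_mulVec_nonneg ![0, 1]
    simpa [dotProduct, Matrix.mulVec, Fin.sum_univ_two] using this
  have hcase : 0 < T 0 0 ∨ 0 < T 1 1 := by
    by_contra h
    push_neg at h
    have e0 : T 0 0 = 0 := le_antisymm h.1 hT00
    have e1 : T 1 1 = 0 := le_antisymm h.2 hT11
    have q1 := hT.dotProduct_mulVec_nonneg ![1, 1]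
    have q2 := hT.dotProduct_mulVec_nonneg ![1, -1]
    simp [dotProduct, Matrix.mulVec, Fin.sum_univ_two, e0, e1, hsym] at q1 q2
    have e2 : T 1 0 = 0 := le_antisymm (by linarith) (by linarith)
    apply hTne
    ext i j
    fin_cases i <;> fin_cases j <;>
      simp_all
  rcases hcase with hpos | hpos
  · rw [hdd, mul_zero] at h1
    nlinarith
  · rw [hdd, mul_zero] at h2
    nlinarith
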